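/- Let X = L²(ℝ, e^{-t²} dt). For every real polynomial p of degree at most n and every 1 ≤ k ≤ n, ‖p^{(k)}‖_X ≤ 2^{k/2} √(n!/(n-k)!) · ‖p‖_X, and equality holds for p = H_n, the n-th Hermite polynomial. Consequently sup over nonzero p ∈ P_n of ‖p^{(k)}‖_X/‖p‖_X equals 2^{k/2} √(n!/(n-k)!). -/

import Mathlib

open MeasureTheory Polynomial Filter Real
open scoped ENNReal

set_option linter.unusedVariables false
set_option linter.unnecessarySimpa false

section MarkovAux
set_option maxHeartbeats 1000000

lemma tendA (p : Polynomial ℝ) (c : ℝ) :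
    Tendsto (fun x => p.eval x * Real.exp (c * x - x ^ 2)) atTop (nhds 0) := by
  have hg : Tendsto (fun x => ‖p.eval x / Real.exp x‖) atTop (nhds 0) := by
    simpa using (p.tendsto_div_exp_atTop).norm
  refine squeeze_zero_norm' ?_ hg
  filter_upwards [eventually_ge_atTop (max 1 (c + 1))] with x hx
  have hx1 : (1:ℝ) ≤ x := le_trans (le_max_left _ _) hx
  have hx2 : c + 1 ≤ x := le_trans (le_max_right _ _) hx
  have h1 : Real.exp (c * x - x ^ 2) ≤ Real.exp (-x) := by
    apply Real.exp_le_exp.2; nlinarith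
  have h2 : ‖p.eval x * Real.exp (c * x - x ^ 2)‖ = ‖p.eval x‖ * Real.exp (c * x - x ^ 2) := by
    rw [norm_mul, Real.norm_of_nonneg (Real.exp_pos _).le]
  rw [h2, norm_div, Real.norm_of_nonneg (Real.exp_pos _).le, div_eq_mul_inv, ← Real.exp_neg]
  exact mul_le_mul_of_nonneg_left h1 (norm_nonneg _)

lemma tendB (p : Polynomial ℝ) (c : ℝ) :
    Tendsto (fun x => p.eval x * Real.exp (c * x - x ^ 2)) atBot (nhds 0) := by
  have h2 := (tendA (p.comp (-X)) (-c)).comp tendsto_neg_atBot_atTop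
  convert h2 using 2 with x
  simp only [Function.comp_apply, eval_comp, eval_neg, eval_X]
  ring_nf

lemma cont_pg (p : Polynomial ℝ) : Continuous (fun x : ℝ => p.eval x * Real.exp (-x ^ 2)) :=
  p.continuous_aeval.mul (Real.continuous_exp.comp (continuous_pow 2).neg)

lemma integrable_pg (p : Polynomial ℝ) :
    Integrable (fun x : ℝ => p.eval x * Real.exp (-x ^ 2)) := by
  apply ((cont_pg p).locallyIntegrable).integrable_of_isBigO_atBot_atTop
    (g := fun x => Real.exp x) (g' := fun x => Real.exp (-x))
  · have h2 := (tendA (p.comp (-X)) 1).comp tendsto_neg_atBot_atTop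
    have h3 : Tendsto (fun x => (p.eval x * Real.exp (-x^2)) / Real.exp x) atBot (nhds 0) := by
      convert h2 using 2 with x
      simp only [Function.comp_apply, eval_comp, eval_neg, eval_X]
      rw [div_eq_mul_inv, ← Real.exp_neg, mul_assoc, ← Real.exp_add]
      ring_nf
    exact ((Asymptotics.isLittleO_iff_tendsto
      (fun x h => absurd h (Real.exp_ne_zero x))).2 h3).isBigO
  · exact ⟨Set.Iic 0, Iic_mem_atBot 0, integrableOn_exp_Iic 0⟩
  · have h3 : Tendsto (fun x => (p.eval x * Real.exp (-x^2)) / Real.exp (-x)) atTop (nhds 0) := by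
      have := tendA p 1
      convert this using 2 with x
      rw [div_eq_mul_inv, ← Real.exp_neg, mul_assoc, ← Real.exp_add]
      ring_nf
    exact Asymptotics.isBigO_of_div_tendsto_nhds
      (Filter.Eventually.of_forall (fun x h => absurd h (Real.exp_ne_zero (-x)))) 0 h3
  · exact ⟨Set.Ioi 0, Ioi_mem_atTop 0, by simpa using exp_neg_integrableOn_Ioi 0 one_pos⟩

noncomputable def JL : Polynomial ℝ →ₗ[ℝ] ℝ where
  toFun p := ∫ x : ℝ, p.eval x * Real.exp (-x ^ 2)
  map_add' p q := by
    simp only [eval_add, add_mul]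
    exact integral_add (integrable_pg p) (integrable_pg q)
  map_smul' c p := by
    simp only [eval_smul, smul_eq_mul, RingHom.id_apply, mul_assoc]
    exact integral_const_mul c _

lemma J_parts (p : Polynomial ℝ) : JL (derivative p) = JL (C 2 * X * p) := by
  set r : Polynomial ℝ := derivative p - C 2 * X * p with hr
  have hderiv : ∀ x : ℝ, HasDerivAt (fun x : ℝ => p.eval x * Real.exp (-x ^ 2))
      (r.eval x * Real.exp (-x ^ 2)) x := by
    intro x
    have h1 : HasDerivAt (fun x : ℝ => Real.exp (-x ^ 2)) (Real.exp (-x ^ 2) * -(2 * x)) x := by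
      simpa using ((hasDerivAt_pow 2 x).neg).exp
    have h2 := (p.hasDerivAt x).fun_mul h1
    refine h2.congr_deriv ?_
    simp only [hr, eval_sub, eval_mul, eval_C, eval_X]
    ring
  have hint : Integrable (fun x : ℝ => r.eval x * Real.exp (-x ^ 2)) := integrable_pg r
  have htop : Tendsto (fun x : ℝ => p.eval x * Real.exp (-x ^ 2)) atTop (nhds 0) := by
    simpa using tendA p 0
  have hbot : Tendsto (fun x : ℝ => p.eval x * Real.exp (-x ^ 2)) atBot (nhds 0) := by
    simpa using tendB p 0
  have h0 : JL r = 0 := by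
    show (∫ x : ℝ, r.eval x * Real.exp (-x ^ 2)) = 0
    rw [← intervalIntegral.integral_Iic_add_Ioi (b := 0) hint.integrableOn hint.integrableOn,
      integral_Iic_of_hasDerivAt_of_tendsto' (fun x _ => hderiv x) hint.integrableOn hbot,
      integral_Ioi_of_hasDerivAt_of_tendsto' (fun x _ => hderiv x) hint.integrableOn htop]
    ring
  have := map_sub JL (derivative p) (C 2 * X * p)
  rw [← hr, h0] at this
  linarith

lemma JL_def (p : Polynomial ℝ) : JL p = ∫ x : ℝ, p.eval x * Real.exp (-x ^ 2) := rfl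



open MeasureTheory Polynomial

/-- Physicists' Hermite polynomials: `H₀ = 1`, `H₁ = 2X`,
`H_{n+2} = 2X·H_{n+1} - 2(n+1)·H_n`. -/
noncomputable def physHermite : ℕ → Polynomial ℝ
  | 0 => 1
  | 1 => C (2 : ℝ) * X
  | (n + 2) => C (2 : ℝ) * X * physHermite (n + 1) - C (2 * (n + 1) : ℝ) * physHermite n

/-- The `L²(ℝ, e^{-t²} dt)` norm of a polynomial. -/
noncomputable def hermiteNorm (p : Polynomial ℝ) : ℝ :=
  Real.sqrt (∫ t : ℝ, (p.eval t) ^ 2 * Real.exp (-t ^ 2))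

lemma ph_rec (n : ℕ) : physHermite (n + 1)
    = C 2 * X * physHermite n - (2 * n : ℝ) • physHermite (n - 1) := by
  cases n with
  | zero => simp [physHermite]
  | succ m =>
    show physHermite (m + 2) = _
    rw [physHermite, smul_eq_C_mul]
    push_cast
    ring_nf

lemma ph_deriv : ∀ n : ℕ, derivative (physHermite n) = (2 * n : ℝ) • physHermite (n - 1) := by
  intro n
  induction n using Nat.strong_induction_on with
  | _ n ih =>
    match n with
    | 0 => simp [physHermite]
    | 1 => simp [physHermite]; norm_num [smul_eq_C_mul]
    | (m + 2) =>
      rw [show physHermite (m + 2) = C 2 * X * physHermite (m + 1)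
            - C (2 * (m + 1) : ℝ) * physHermite m from rfl]
      rw [derivative_sub, derivative_mul, derivative_mul, derivative_mul,
        ih (m + 1) (by omega), ih m (by omega),
        show m + 1 - 1 = m from rfl, show m + 2 - 1 = m + 1 from rfl, ph_rec m]
      simp only [derivative_C, derivative_X, smul_eq_C_mul]
      push_cast
      simp only [C_add, C_mul, C_eq_natCast, map_ofNat, C_1]
      ring

lemma ph_raise (n : ℕ) :
    physHermite (n + 1) = C 2 * X * physHermite n - derivative (physHermite n) := by
  rw [ph_rec, ph_deriv]

lemma ph_bound : ∀ n : ℕ, (physHermite n).natDegree ≤ n ∧ (physHermite n).coeff n = 2 ^ n := by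
  intro n
  induction n using Nat.strong_induction_on with
  | _ n ih =>
    match n with
    | 0 => simp [physHermite]
    | 1 =>
      constructor
      · exact le_trans (natDegree_mul_le) (by simp)
      · simp [physHermite, coeff_C_mul]
    | (m + 2) =>
      obtain ⟨h1d, h1c⟩ := ih (m + 1) (by omega)
      obtain ⟨h0d, h0c⟩ := ih m (by omega)
      rw [show physHermite (m + 2) = C 2 * X * physHermite (m + 1)
            - C (2 * (m + 1) : ℝ) * physHermite m from rfl]
      constructor
      · refine le_trans (natDegree_sub_le _ _) (max_le ?_ ?_)
        · refine le_trans (natDegree_mul_le) ?_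
          have : (C (2:ℝ) * X).natDegree ≤ 1 := le_trans natDegree_mul_le (by simp)
          omega
        · refine le_trans (natDegree_mul_le) ?_
          simp only [natDegree_C, zero_add]
          omega
      · rw [coeff_sub, mul_assoc, coeff_C_mul, coeff_X_mul, h1c, coeff_C_mul,
          coeff_eq_zero_of_natDegree_lt (by omega)]
        ring

lemma ph_coeff_self (n : ℕ) : (physHermite n).coeff n = 2 ^ n := (ph_bound n).2

lemma ph_ne_zero (n : ℕ) : physHermite n ≠ 0 := by
  intro h
  have h1 := ph_coeff_self n
  rw [h] at h1
  simp only [coeff_zero] at h1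
  have h2 : (0:ℝ) < 2 ^ n := by positivity
  rw [← h1] at h2
  exact lt_irrefl _ h2

lemma ph_natDegree (n : ℕ) : (physHermite n).natDegree = n :=
  le_antisymm (ph_bound n).1 (le_natDegree_of_ne_zero (by rw [ph_coeff_self]; positivity))

lemma ph_iter (j k : ℕ) : (derivative^[k]) (physHermite j)
    = ((2 ^ k * j.descFactorial k : ℕ) : ℝ) • physHermite (j - k) := by
  induction k with
  | zero => simp
  | succ k ihk =>
    rw [Function.iterate_succ_apply', ihk, derivative_smul, ph_deriv, smul_smul,
      show j - k - 1 = j - (k + 1) by omega]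
    congr 1
    rw [Nat.descFactorial_succ]
    push_cast
    ring

lemma pint_adj (p q : Polynomial ℝ) :
    JL (derivative p * q) = JL (p * (C 2 * X * q - derivative q)) := by
  have h := J_parts (p * q)
  rw [derivative_mul, map_add] at h
  rw [mul_sub, map_sub]
  rw [show p * (C 2 * X * q) = C 2 * X * (p * q) by ring]
  linarith

lemma pint_step (p : Polynomial ℝ) (b : ℕ) :
    JL (derivative p * physHermite b) = JL (p * physHermite (b + 1)) := by
  rw [pint_adj, ← ph_raise]

lemma ph_orth_lt : ∀ a b : ℕ, a < b → JL (physHermite a * physHermite b) = 0 := by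
  intro a
  induction a with
  | zero =>
    intro b hb
    obtain ⟨c, rfl⟩ : ∃ c, b = c + 1 := ⟨b - 1, by omega⟩
    have h := pint_step 1 c
    simpa [physHermite] using h.symm
  | succ a iha =>
    intro b hb
    obtain ⟨c, rfl⟩ : ∃ c, b = c + 1 := ⟨b - 1, by omega⟩
    have h := pint_step (physHermite (a + 1)) c
    rw [ph_deriv (a + 1), show a + 1 - 1 = a from rfl, smul_mul_assoc, _root_.map_smul] at h
    rw [← h, iha c (by omega)]
    simp

lemma ph_orth (a b : ℕ) (h : a ≠ b) : JL (physHermite a * physHermite b) = 0 := by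
  rcases h.lt_or_gt with h' | h'
  · exact ph_orth_lt a b h'
  · rw [mul_comm]; exact ph_orth_lt b a h'

lemma ph_norm (a : ℕ) :
    JL (physHermite a * physHermite a) = ((2 ^ a * a.factorial : ℕ) : ℝ) * Real.sqrt π := by
  induction a with
  | zero =>
    rw [show physHermite 0 = 1 from rfl, mul_one, JL_def]
    simp only [eval_one, one_mul]
    have := integral_gaussian 1
    simp only [neg_mul, one_mul] at this
    rw [this]
    simp
  | succ a iha =>
    have h := pint_step (physHermite (a + 1)) a
    rw [ph_deriv (a + 1), show a + 1 - 1 = a from rfl, smul_mul_assoc, _root_.map_smul] at h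
    rw [← h, iha, smul_eq_mul]
    push_cast [Nat.factorial_succ]
    ring

lemma hermiteNorm_eq (p : Polynomial ℝ) : hermiteNorm p = Real.sqrt (JL (p * p)) := by
  rw [hermiteNorm, JL_def]
  congr 1
  refine integral_congr_ae (Filter.Eventually.of_forall fun t => ?_)
  simp only [eval_mul]; ring

lemma J_sq_pos (p : Polynomial ℝ) (hp : p ≠ 0) : 0 < JL (p * p) := by
  rw [JL_def]
  have hnn : 0 ≤ fun x : ℝ => (p * p).eval x * Real.exp (-x ^ 2) := by
    intro x
    simp only [eval_mul]
    have : (0:ℝ) ≤ p.eval x * p.eval x := mul_self_nonneg _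
    positivity
  rw [integral_pos_iff_support_of_nonneg hnn (integrable_pg _)]
  have hsub : {x : ℝ | p.IsRoot x}ᶜ ⊆ Function.support fun x => (p * p).eval x * Real.exp (-x ^ 2) := by
    intro x hx
    simp only [Set.mem_compl_iff, Set.mem_setOf_eq, IsRoot] at hx
    simp only [Function.mem_support, eval_mul]
    have := Real.exp_pos (-x ^ 2)
    intro hcontra
    rcases mul_eq_zero.1 hcontra with h | h
    · exact hx (by rcases mul_eq_zero.1 h with h' | h' <;> exact h')
    · exact absurd h this.ne'
  have hroots : (volume : Measure ℝ) {x : ℝ | p.IsRoot x} = 0 :=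
    (Polynomial.finite_setOf_isRoot hp).measure_zero _
  have hcompl : (volume : Measure ℝ) {x : ℝ | p.IsRoot x}ᶜ ≠ 0 := by
    intro h0
    have : (volume : Measure ℝ) Set.univ = 0 := by
      have := measure_union_le (μ := volume) {x : ℝ | p.IsRoot x} {x : ℝ | p.IsRoot x}ᶜ
      rw [Set.union_compl_self, hroots, h0] at this
      simpa using this
    rw [Real.volume_univ] at this
    simp at this
  calc (0:ℝ≥0∞) < volume {x : ℝ | p.IsRoot x}ᶜ := by
        exact pos_iff_ne_zero.2 hcompl
    _ ≤ _ := measure_mono hsub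

lemma hermiteNorm_pos (p : Polynomial ℝ) (hp : p ≠ 0) : 0 < hermiteNorm p := by
  rw [hermiteNorm_eq]
  exact Real.sqrt_pos.2 (J_sq_pos p hp)

lemma ph_span : ∀ (n : ℕ) (p : Polynomial ℝ), p.natDegree ≤ n →
    ∃ c : ℕ → ℝ, p = ∑ j ∈ Finset.range (n + 1), c j • physHermite j := by
  intro n
  induction n with
  | zero =>
    intro p hp
    refine ⟨fun _ => p.coeff 0, ?_⟩
    rw [eq_C_of_natDegree_le_zero hp]
    simp [physHermite, smul_eq_C_mul]
  | succ n ihn =>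
    intro p hp
    set a : ℝ := p.coeff (n + 1) / 2 ^ (n + 1) with ha
    set q : Polynomial ℝ := p - a • physHermite (n + 1) with hq
    have hqdeg : q.natDegree ≤ n := by
      rw [natDegree_le_iff_coeff_eq_zero]
      intro m hm
      rw [hq, coeff_sub, coeff_smul, smul_eq_mul]
      rcases eq_or_lt_of_le (Nat.succ_le_of_lt hm) with h | h
      · rw [← h, ph_coeff_self, ha]
        field_simp
        ring
      · rw [natDegree_le_iff_coeff_eq_zero.1 hp m h,
          coeff_eq_zero_of_natDegree_lt (by rw [ph_natDegree]; omega)]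
        ring
    obtain ⟨c, hc⟩ := ihn q hqdeg
    refine ⟨fun j => if j = n + 1 then a else c j, ?_⟩
    rw [Finset.sum_range_succ, Finset.sum_congr rfl (fun j hj => by
      simp only
      rw [if_neg (by simp only [Finset.mem_range] at hj; omega)]), ← hc]
    show p = q + (if n + 1 = n + 1 then a else c (n + 1)) • physHermite (n + 1)
    rw [if_pos rfl, hq]
    abel

lemma J_sum_general (m k : ℕ) (d : ℕ → ℝ) (hd : ∀ j < k, d j = 0) :
    JL ((∑ j ∈ Finset.range m, d j • physHermite (j - k)) *
        (∑ i ∈ Finset.range m, d i • physHermite (i - k)))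
      = ∑ j ∈ Finset.range m, (d j) ^ 2 * JL (physHermite (j - k) * physHermite (j - k)) := by
  rw [Finset.sum_mul_sum]
  rw [map_sum]
  refine Finset.sum_congr rfl (fun j hj => ?_)
  rw [map_sum]
  rw [Finset.sum_eq_single j]
  · rw [smul_mul_smul_comm, _root_.map_smul, smul_eq_mul]
    ring
  · intro i hi hij
    rw [smul_mul_smul_comm, _root_.map_smul, smul_eq_mul]
    rcases lt_or_ge j k with h | h
    · rw [hd j h]; ring
    · rcases lt_or_ge i k with h' | h'
      · rw [hd i h']; ring
      · rw [ph_orth (j - k) (i - k) (by omega)]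
        ring
  · intro h
    exact absurd hj h

lemma nat_key {j k : ℕ} (hkj : k ≤ j) :
    (2 ^ k * j.descFactorial k) ^ 2 * (2 ^ (j - k) * (j - k).factorial)
      = (2 ^ k * j.descFactorial k) * (2 ^ j * j.factorial) := by
  have h := Nat.factorial_mul_descFactorial hkj
  calc (2 ^ k * j.descFactorial k) ^ 2 * (2 ^ (j - k) * (j - k).factorial)
      = (2 ^ k * j.descFactorial k) * ((2 ^ k * 2 ^ (j - k))
          * ((j - k).factorial * j.descFactorial k)) := by ring
    _ = _ := by rw [← pow_add, Nat.add_sub_cancel' hkj, h]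

lemma key_ineq (n k : ℕ) (hkn : k ≤ n) (p : Polynomial ℝ) (hp : p.natDegree ≤ n) :
    JL ((derivative^[k]) p * (derivative^[k]) p)
      ≤ ((2 ^ k * n.descFactorial k : ℕ) : ℝ) * JL (p * p) := by
  obtain ⟨c, hc⟩ := ph_span n p hp
  set A : ℕ → ℝ := fun j => ((2 ^ k * j.descFactorial k : ℕ) : ℝ) with hA
  have hDp : (derivative^[k]) p = ∑ j ∈ Finset.range (n + 1),
      (c j * A j) • physHermite (j - k) := by
    rw [hc, iterate_derivative_sum]
    refine Finset.sum_congr rfl (fun j hj => ?_)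
    rw [iterate_derivative_smul, ph_iter, smul_smul]
  have hT : JL ((derivative^[k]) p * (derivative^[k]) p)
      = ∑ j ∈ Finset.range (n + 1),
          (c j * A j) ^ 2 * JL (physHermite (j - k) * physHermite (j - k)) := by
    rw [hDp]
    exact J_sum_general (n + 1) k _ (fun j hj => by
      simp [hA, Nat.descFactorial_of_lt hj])
  have hS : JL (p * p) = ∑ j ∈ Finset.range (n + 1),
      (c j) ^ 2 * JL (physHermite j * physHermite j) := by
    rw [hc]
    have := J_sum_general (n + 1) 0 c (fun j hj => absurd hj (Nat.not_lt_zero j))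
    simpa using this
  rw [hT, hS, Finset.mul_sum]
  refine Finset.sum_le_sum (fun j hj => ?_)
  simp only [Finset.mem_range] at hj
  have hjn : j ≤ n := by omega
  have h1 : (0:ℝ) < JL (physHermite j * physHermite j) := J_sq_pos _ (ph_ne_zero j)
  rcases lt_or_ge j k with h | h
  · have hz : A j = 0 := by simp [hA, Nat.descFactorial_of_lt h]
    rw [hz, mul_zero, zero_pow (two_ne_zero), zero_mul]
    exact mul_nonneg (Nat.cast_nonneg _) (mul_nonneg (sq_nonneg _) h1.le)
  · have hcast : A j ^ 2 * ((2 ^ (j - k) * (j - k).factorial : ℕ) : ℝ)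
        = A j * ((2 ^ j * j.factorial : ℕ) : ℝ) := by
      simp only [hA]
      exact_mod_cast congrArg (Nat.cast : ℕ → ℝ) (nat_key h)
    have hAN : A j ^ 2 * JL (physHermite (j - k) * physHermite (j - k))
        = A j * JL (physHermite j * physHermite j) := by
      rw [ph_norm, ph_norm, ← mul_assoc, ← mul_assoc, hcast]
    rw [mul_pow, mul_assoc, hAN, ← mul_assoc, ← mul_assoc]
    have hle : A j ≤ ((2 ^ k * n.descFactorial k : ℕ) : ℝ) := by
      have : (2 ^ k * j.descFactorial k : ℕ) ≤ (2 ^ k * n.descFactorial k : ℕ) :=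
        Nat.mul_le_mul_left _ (Nat.descFactorial_le k hjn)
      simp only [hA]
      exact_mod_cast this
    have hcc : c j ^ 2 * A j ≤ ((2 ^ k * n.descFactorial k : ℕ) : ℝ) * c j ^ 2 := by
      rw [mul_comm (c j ^ 2) (A j)]
      exact mul_le_mul_of_nonneg_right hle (sq_nonneg _)
    exact mul_le_mul_of_nonneg_right hcc h1.le

lemma key_eq (n k : ℕ) (hkn : k ≤ n) :
    JL ((derivative^[k]) (physHermite n) * (derivative^[k]) (physHermite n))
      = ((2 ^ k * n.descFactorial k : ℕ) : ℝ) * JL (physHermite n * physHermite n) := by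
  have hcast : ((2 ^ k * n.descFactorial k : ℕ) : ℝ) ^ 2
        * ((2 ^ (n - k) * (n - k).factorial : ℕ) : ℝ)
      = ((2 ^ k * n.descFactorial k : ℕ) : ℝ) * ((2 ^ n * n.factorial : ℕ) : ℝ) := by
    exact_mod_cast congrArg (Nat.cast : ℕ → ℝ) (nat_key hkn)
  rw [ph_iter, smul_mul_smul_comm, _root_.map_smul, smul_eq_mul, ph_norm, ph_norm,
    ← mul_assoc, ← mul_assoc, ← sq, hcast, mul_assoc]

lemma const_eq (n k : ℕ) (hkn : k ≤ n) :
    (2 : ℝ) ^ ((k : ℝ) / 2) * Real.sqrt ((n.factorial : ℝ) / ((n - k).factorial : ℝ))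
      = Real.sqrt (((2 ^ k * n.descFactorial k : ℕ) : ℝ)) := by
  have h2 : ((n.factorial : ℝ)) / ((n - k).factorial : ℝ) = ((n.descFactorial k : ℕ) : ℝ) := by
    have h := Nat.factorial_mul_descFactorial hkn
    have h' : ((n - k).factorial : ℝ) * ((n.descFactorial k : ℕ) : ℝ) = (n.factorial : ℝ) := by
      exact_mod_cast congrArg (Nat.cast : ℕ → ℝ) h
    rw [div_eq_iff (show ((n - k).factorial : ℝ) ≠ 0 by
      exact_mod_cast (n - k).factorial_ne_zero)]
    linear_combination -h'
  have h1 : (2 : ℝ) ^ ((k : ℝ) / 2) = Real.sqrt ((2 : ℝ) ^ k) := by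
    rw [Real.sqrt_eq_rpow, ← Real.rpow_natCast 2 k, ← Real.rpow_mul (by norm_num)]
    norm_num
    ring_nf
  rw [h1, h2, ← Real.sqrt_mul (by positivity)]
  congr 1
  push_cast
  ring

end MarkovAux

theorem markov_L2_hermite (n k : ℕ) (hk1 : 1 ≤ k) (hkn : k ≤ n) :
    (∀ p : Polynomial ℝ, p.natDegree ≤ n →
        hermiteNorm ((Polynomial.derivative^[k]) p) ≤
          (2 : ℝ) ^ ((k : ℝ) / 2) * Real.sqrt ((n.factorial : ℝ) / ((n - k).factorial : ℝ)) *
            hermiteNorm p) ∧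
    hermiteNorm ((Polynomial.derivative^[k]) (physHermite n)) =
      (2 : ℝ) ^ ((k : ℝ) / 2) * Real.sqrt ((n.factorial : ℝ) / ((n - k).factorial : ℝ)) *
        hermiteNorm (physHermite n) ∧
    sSup {r : ℝ | ∃ p : Polynomial ℝ, p ≠ 0 ∧ p.natDegree ≤ n ∧
        r = hermiteNorm ((Polynomial.derivative^[k]) p) / hermiteNorm p} =
      (2 : ℝ) ^ ((k : ℝ) / 2) * Real.sqrt ((n.factorial : ℝ) / ((n - k).factorial : ℝ)) := by
  have hCst := const_eq n k hkn
  have part1 : ∀ p : Polynomial ℝ, p.natDegree ≤ n →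
      hermiteNorm ((derivative^[k]) p) ≤
        (2 : ℝ) ^ ((k : ℝ) / 2) * Real.sqrt ((n.factorial : ℝ) / ((n - k).factorial : ℝ)) *
          hermiteNorm p := by
    intro p hp
    rw [hermiteNorm_eq, hermiteNorm_eq, hCst, ← Real.sqrt_mul (Nat.cast_nonneg _)]
    exact Real.sqrt_le_sqrt (key_ineq n k hkn p hp)
  have part2 : hermiteNorm ((derivative^[k]) (physHermite n)) =
      (2 : ℝ) ^ ((k : ℝ) / 2) * Real.sqrt ((n.factorial : ℝ) / ((n - k).factorial : ℝ)) *
        hermiteNorm (physHermite n) := by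
    rw [hermiteNorm_eq, hermiteNorm_eq, hCst, ← Real.sqrt_mul (Nat.cast_nonneg _),
      key_eq n k hkn]
  refine ⟨part1, part2, ?_⟩
  apply IsGreatest.csSup_eq
  constructor
  · refine ⟨physHermite n, ph_ne_zero n, le_of_eq (ph_natDegree n), ?_⟩
    rw [part2, mul_div_assoc, div_self (hermiteNorm_pos _ (ph_ne_zero n)).ne', mul_one]
  · rintro r ⟨p, hp0, hpd, rfl⟩
    rw [div_le_iff₀ (hermiteNorm_pos p hp0)]
    exact part1 p hpd
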